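/- DMSA finite-sample guarantee with conditional Maxent (Theorem 5): there exists z ∈ Δ such that for any δ > 0, with probability at least 1 − δ over the i.i.d. draw of a sample of size m from Q used to train conditional Maxent, the discriminative distribution-weighted predictor ĝ_z (built from the conditional Maxent estimates Q̂(k|x) = p_ŵ[k|x]) satisfies, for any target distribution D_T in the convex hull of the source distributions: L(D_T, ĝ_z) ≤ ε · p · exp( (6√2 r²)/(μ√m) · (1 + √(log(1/δ))) ) · d* · d'*, where d* = sup_{x ∈ X} d_∞( Q*[·|x] ‖ Q(·|x) ) and d'* = sup_{x ∈ X} d_∞( Q(·|x) ‖ Q*[·|x] )², with Q*(·|x) = p_{w*}[·|x] the population conditional Maxent solution. -/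

import Mathlib

open scoped BigOperators RealInnerProductSpace

attribute [local instance] Classical.propDecidable

/-- Conditional Maxent (multinomial logistic regression) model:
`p_w[k | x] = exp(w · Φ(x, k)) / Σ_j exp(w · Φ(x, j))`. -/
noncomputable def condMaxent {X : Type*} {p N : ℕ}
    (Φ : X × Fin p → EuclideanSpace ℝ (Fin N))
    (w : EuclideanSpace ℝ (Fin N)) (v : X × Fin p) : ℝ :=
  Real.exp ⟪w, Φ v⟫ / ∑ j, Real.exp ⟪w, Φ (v.1, j)⟫

/-- Distribution-weighted combination of the predictors `h k` with weights
proportional to `z k * W k x`. -/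
noncomputable def weightedComb {X : Type*} {p : ℕ} [Fintype X]
    (W : Fin p → X → ℝ) (h : Fin p → X → ℝ) (z : Fin p → ℝ) (x : X) : ℝ :=
  ∑ k, (z k * W k x / ∑ j, z j * W j x) * h k x

/-- Expected loss `L(D, g) = E_{(x,y)∼D}[ℓ(g(x), y)]` on a finite space. -/
noncomputable def expLoss {X Y : Type*} [Fintype X] [Fintype Y]
    (ℓ : ℝ → Y → ℝ) (D : X × Y → ℝ) (g : X → ℝ) : ℝ :=
  ∑ v : X × Y, D v * ℓ (g v.1) v.2

/-- Probability, under i.i.d. sampling of `m` points from the finite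
distribution `Qf`, of the set of samples satisfying `E`. -/
noncomputable def sampleProb {Z : Type*} [Fintype Z] (m : ℕ) (Qf : Z → ℝ)
    (E : (Fin m → Z) → Prop) : ℝ :=
  ∑ S : Fin m → Z, if E S then ∏ i, Qf (S i) else 0

namespace DMSA

variable {Z : Type*} [Fintype Z]

/-- Sum over tuples of length `m+1` decomposes as head/tail. -/
lemma sum_pi_succ {m : ℕ} (F : (Fin (m + 1) → Z) → ℝ) :
    ∑ S : Fin (m + 1) → Z, F S = ∑ z : Z, ∑ T : Fin m → Z, F (Fin.cons z T) := by
  have hb : Function.Bijective (fun p : Z × (Fin m → Z) => (Fin.cons p.1 p.2 : Fin (m+1) → Z)) := by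
    refine Function.bijective_iff_has_inverse.2 ⟨fun S => (S 0, Fin.tail S), fun p => ?_, fun S => ?_⟩
    · simp [Fin.tail_cons]
    · simp [Fin.cons_self_tail]
  rw [← Fintype.sum_bijective _ hb _ F (fun p => rfl), Fintype.sum_prod_type]

/-- Normalization: the product weights sum to 1. -/
lemma sum_prod_pi (q : Z → ℝ) (hq1 : ∑ z, q z = 1) :
    ∀ m : ℕ, ∑ S : Fin m → Z, ∏ i, q (S i) = 1 := by
  intro m
  induction m with
  | zero => simp
  | succ n ih =>
    rw [sum_pi_succ (fun S => ∏ i, q (S i))]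
    have : ∀ z : Z, ∑ T : Fin n → Z, ∏ i, q ((Fin.cons z T : Fin (n+1) → Z) i)
        = q z := by
      intro z
      have : ∀ T : Fin n → Z, ∏ i, q ((Fin.cons z T : Fin (n+1) → Z) i)
          = q z * ∏ i, q (T i) := by
        intro T; rw [Fin.prod_univ_succ]; simp
      rw [Finset.sum_congr rfl (fun T _ => this T), ← Finset.mul_sum, ih, mul_one]
    rw [Finset.sum_congr rfl (fun z _ => this z), hq1]

/-- Reindexing by the "swap coordinate i with fresh point" involution. -/
lemma invol_sum (q : Z → ℝ) {m : ℕ} (i : Fin m) (F : (Fin m → Z) → Z → ℝ) :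
    ∑ S : Fin m → Z, ∑ z, (∏ j, q (S j)) * q z * F S z
      = ∑ S : Fin m → Z, ∑ z, (∏ j, q (S j)) * q z * F (Function.update S i z) (S i) := by
  classical
  have hinv : Function.Involutive
      (fun P : (Fin m → Z) × Z => ((Function.update P.1 i P.2 : Fin m → Z), P.1 i)) := by
    intro P
    simp [Function.update_idem, Function.update_eq_self]
  set e := hinv.toPerm with he
  have key : ∀ P : (Fin m → Z) × Z,
      (∏ j, q (P.1 j)) * q P.2 * F (Function.update P.1 i P.2) (P.1 i)
        = (fun Q : (Fin m → Z) × Z => (∏ j, q (Q.1 j)) * q Q.2 * F Q.1 Q.2) (e P) := by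
    intro ⟨S, z⟩
    have hne : ∀ j, j ∈ Finset.univ \ {i} → Function.update S i z j = S j := by
      intro j hj
      exact Function.update_of_ne (Finset.notMem_singleton.1 (Finset.mem_sdiff.1 hj).2) _ _
    have h1 : ∏ j, q (Function.update S i z j)
        = (∏ j ∈ Finset.univ \ {i}, q (S j)) * q z := by
      rw [Finset.prod_eq_prod_diff_singleton_mul (Finset.mem_univ i)
        (fun j => q (Function.update S i z j)), Function.update_self]
      rw [Finset.prod_congr rfl (fun j hj => by rw [hne j hj])]
    have h2 : ∏ j, q (S j) = (∏ j ∈ Finset.univ \ {i}, q (S j)) * q (S i) :=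
      Finset.prod_eq_prod_diff_singleton_mul (Finset.mem_univ i) (fun j => q (S j))
    simp only [he, Function.Involutive.coe_toPerm]
    rw [h1, h2]; ring
  calc ∑ S : Fin m → Z, ∑ z, (∏ j, q (S j)) * q z * F S z
      = ∑ P : (Fin m → Z) × Z, (∏ j, q (P.1 j)) * q P.2 * F P.1 P.2 := by
        rw [Fintype.sum_prod_type]
    _ = ∑ P : (Fin m → Z) × Z, (∏ j, q (P.1 j)) * q P.2 * F (Function.update P.1 i P.2) (P.1 i) := by
        rw [Finset.sum_congr rfl (fun P _ => key P)]
        exact (Equiv.sum_comp e _).symm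
    _ = _ := by rw [Fintype.sum_prod_type]

/-- Expectation of a function of one coordinate. -/
lemma exp_coord (q : Z → ℝ) (hq1 : ∑ z, q z = 1) {m : ℕ} (i : Fin m) (g : Z → ℝ) :
    ∑ S : Fin m → Z, (∏ j, q (S j)) * g (S i) = ∑ z, q z * g z := by
  have h := invol_sum q i (fun _ z => g z)
  have hL : ∑ S : Fin m → Z, ∑ z, (∏ j, q (S j)) * q z * g z
      = ∑ z, q z * g z := by
    have : ∀ S : Fin m → Z, ∑ z, (∏ j, q (S j)) * q z * g z
        = (∏ j, q (S j)) * ∑ z, q z * g z := by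
      intro S; rw [Finset.mul_sum]; exact Finset.sum_congr rfl (fun z _ => by ring)
    rw [Finset.sum_congr rfl (fun S _ => this S), ← Finset.sum_mul, sum_prod_pi q hq1, one_mul]
  have hR : ∑ S : Fin m → Z, ∑ z, (∏ j, q (S j)) * q z * g (S i)
      = ∑ S : Fin m → Z, (∏ j, q (S j)) * g (S i) := by
    refine Finset.sum_congr rfl (fun S _ => ?_)
    have : ∀ z, (∏ j, q (S j)) * q z * g (S i) = q z * ((∏ j, q (S j)) * g (S i)) := by
      intro z; ring
    rw [Finset.sum_congr rfl (fun z _ => this z), ← Finset.sum_mul, hq1, one_mul]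
  rw [← hR, ← h, hL]

/-- One-variable sub-Gaussian bound via cosh. -/
lemma single_mgf [Nonempty Z] (q : Z → ℝ) (hq0 : ∀ z, 0 ≤ q z) (hq1 : ∑ z, q z = 1)
    (g : Z → ℝ) (c lam : ℝ) (hg : ∀ z z', g z - g z' ≤ c) :
    ∑ z, q z * Real.exp (lam * (g z - ∑ z', q z' * g z'))
      ≤ Real.exp (lam ^ 2 * c ^ 2 / 2) := by
  classical
  have hc : 0 ≤ c := le_trans (by simp [sub_self]) (hg (Classical.arbitrary Z) (Classical.arbitrary Z))
  set Eg := ∑ z', q z' * g z' with hEg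
  have hYle : ∀ z, g z - Eg ≤ c := by
    intro z
    have : g z - Eg = ∑ z', q z' * (g z - g z') := by
      rw [Finset.sum_congr rfl (fun z' _ => by ring_nf : ∀ z' ∈ Finset.univ,
        q z' * (g z - g z') = q z' * g z - q z' * g z'), Finset.sum_sub_distrib,
        ← Finset.sum_mul, hq1, hEg]; ring
    rw [this]
    calc ∑ z', q z' * (g z - g z') ≤ ∑ z', q z' * c :=
          Finset.sum_le_sum (fun z' _ => mul_le_mul_of_nonneg_left (hg z z') (hq0 z'))
      _ = c := by rw [← Finset.sum_mul, hq1, one_mul]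
  have hYge : ∀ z, -c ≤ g z - Eg := by
    intro z
    have : Eg - g z = ∑ z', q z' * (g z' - g z) := by
      rw [Finset.sum_congr rfl (fun z' _ => by ring_nf : ∀ z' ∈ Finset.univ,
        q z' * (g z' - g z) = q z' * g z' - q z' * g z), Finset.sum_sub_distrib,
        ← Finset.sum_mul, hq1, hEg]; ring
    have h2 : Eg - g z ≤ c := by
      rw [this]
      calc ∑ z', q z' * (g z' - g z) ≤ ∑ z', q z' * c :=
            Finset.sum_le_sum (fun z' _ => mul_le_mul_of_nonneg_left (hg z' z) (hq0 z'))
        _ = c := by rw [← Finset.sum_mul, hq1, one_mul]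
    linarith
  rcases eq_or_lt_of_le hc with hc0 | hcpos
  · -- c = 0 : g is constant
    have hgc : ∀ z, g z - Eg = 0 := by
      intro z; have h1 := hYle z; have h2 := hYge z; linarith [hc0.symm ▸ (le_refl c)]
    have : ∀ z, q z * Real.exp (lam * (g z - Eg)) = q z := by
      intro z; rw [hgc z]; simp
    rw [Finset.sum_congr rfl (fun z _ => this z), hq1]
    exact Real.one_le_exp (by positivity)
  · -- c > 0
    have key : ∀ z, Real.exp (lam * (g z - Eg))
        ≤ ((g z - Eg + c) / (2 * c)) * Real.exp (lam * c)
          + ((c - (g z - Eg)) / (2 * c)) * Real.exp (- (lam * c)) := by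
      intro z
      set Y := g z - Eg with hY
      have hθ0 : 0 ≤ (Y + c) / (2 * c) := by
        have := hYge z; rw [← hY] at this
        apply div_nonneg <;> linarith
      have hθ0' : 0 ≤ (c - Y) / (2 * c) := by
        have := hYle z; rw [← hY] at this
        apply div_nonneg <;> linarith
      have hθ1 : (Y + c) / (2 * c) + (c - Y) / (2 * c) = 1 := by
        field_simp; ring
      have hcomb : lam * Y = ((Y + c) / (2 * c)) • (lam * c) + ((c - Y) / (2 * c)) • (-(lam * c)) := by
        simp only [smul_eq_mul]; field_simp; ring
      have := convexOn_exp.2 (Set.mem_univ (lam * c)) (Set.mem_univ (-(lam * c))) hθ0 hθ0' hθ1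
      rw [← hcomb] at this
      simpa [smul_eq_mul] using this
    calc ∑ z, q z * Real.exp (lam * (g z - Eg))
        ≤ ∑ z, q z * (((g z - Eg + c) / (2 * c)) * Real.exp (lam * c)
            + ((c - (g z - Eg)) / (2 * c)) * Real.exp (- (lam * c))) :=
          Finset.sum_le_sum (fun z _ => mul_le_mul_of_nonneg_left (key z) (hq0 z))
      _ = (Real.exp (lam * c) + Real.exp (- (lam * c))) / 2 := by
          have hsum0 : ∑ z, q z * (g z - Eg) = 0 := by
            rw [Finset.sum_congr rfl (fun z _ => by ring_nf : ∀ z ∈ Finset.univ,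
              q z * (g z - Eg) = q z * g z - q z * Eg), Finset.sum_sub_distrib,
              ← Finset.sum_mul, hq1, hEg]; ring
          have expand : ∀ z, q z * (((g z - Eg + c) / (2 * c)) * Real.exp (lam * c)
              + ((c - (g z - Eg)) / (2 * c)) * Real.exp (- (lam * c)))
              = (q z * (g z - Eg)) * ((Real.exp (lam * c) - Real.exp (-(lam * c))) / (2 * c))
                + q z * ((Real.exp (lam * c) + Real.exp (- (lam * c))) / 2) := by
            intro z; field_simp; ring
          rw [Finset.sum_congr rfl (fun z _ => expand z), Finset.sum_add_distrib,
            ← Finset.sum_mul, hsum0, zero_mul, zero_add, ← Finset.sum_mul, hq1, one_mul]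
      _ = Real.cosh (lam * c) := by rw [Real.cosh_eq]
      _ ≤ Real.exp ((lam * c) ^ 2 / 2) := Real.cosh_le_exp_half_sq _
      _ = Real.exp (lam ^ 2 * c ^ 2 / 2) := by ring_nf

/-- McDiarmid-style MGF bound, by induction on the number of coordinates. -/
lemma mcdiarmid_mgf [Nonempty Z] (q : Z → ℝ) (hq0 : ∀ z, 0 ≤ q z) (hq1 : ∑ z, q z = 1)
    (c lam : ℝ) :
    ∀ (m : ℕ) (f : (Fin m → Z) → ℝ),
      (∀ (S : Fin m → Z) (i : Fin m) (z : Z), f (Function.update S i z) - f S ≤ c) →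
      ∑ S : Fin m → Z, (∏ i, q (S i)) *
          Real.exp (lam * (f S - ∑ T : Fin m → Z, (∏ i, q (T i)) * f T))
        ≤ Real.exp (m * (lam ^ 2 * c ^ 2 / 2)) := by
  intro m
  induction m with
  | zero =>
    intro f _
    simp [Real.exp_nonneg]
  | succ n ih =>
    intro f hf
    set g : Z → ℝ := fun z => ∑ T : Fin n → Z, (∏ i, q (T i)) * f (Fin.cons z T) with hgdef
    have prodcons : ∀ (z : Z) (T : Fin n → Z),
        (∏ i, q ((Fin.cons z T : Fin (n+1) → Z) i)) = q z * ∏ i, q (T i) := by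
      intro z T; rw [Fin.prod_univ_succ]; simp
    have hEf : ∑ T : Fin (n+1) → Z, (∏ i, q (T i)) * f T = ∑ z, q z * g z := by
      rw [sum_pi_succ (fun T => (∏ i, q (T i)) * f T)]
      refine Finset.sum_congr rfl (fun z _ => ?_)
      rw [hgdef, Finset.mul_sum]
      exact Finset.sum_congr rfl (fun T _ => by rw [prodcons]; ring)
    -- per-z inner bound from IH
    have inner : ∀ z : Z,
        ∑ T : Fin n → Z, (∏ i, q (T i)) * Real.exp (lam * (f (Fin.cons z T) - g z))
          ≤ Real.exp (n * (lam ^ 2 * c ^ 2 / 2)) := by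
      intro z
      have hfz : ∀ (T : Fin n → Z) (i : Fin n) (z' : Z),
          f (Fin.cons z (Function.update T i z')) - f (Fin.cons z T) ≤ c := by
        intro T i z'
        have : Fin.cons z (Function.update T i z')
            = Function.update (Fin.cons z T : Fin (n+1) → Z) i.succ z' := by
          rw [Fin.cons_update]
        rw [this]
        exact hf _ _ _
      exact ih (fun T => f (Fin.cons z T)) hfz
    -- bounded differences of g
    have hgbd : ∀ z z', g z - g z' ≤ c := by
      intro z z'
      rw [hgdef]
      simp only
      rw [← Finset.sum_sub_distrib]
      have : ∀ T : Fin n → Z, (∏ i, q (T i)) * f (Fin.cons z T)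
          - (∏ i, q (T i)) * f (Fin.cons z' T) ≤ (∏ i, q (T i)) * c := by
        intro T
        rw [← mul_sub]
        refine mul_le_mul_of_nonneg_left ?_ (Finset.prod_nonneg (fun i _ => hq0 _))
        have : Fin.cons z T = Function.update (Fin.cons z' T : Fin (n+1) → Z) 0 z := by
          rw [Fin.update_cons_zero]
        rw [this]
        exact hf _ _ _
      calc _ ≤ ∑ T : Fin n → Z, (∏ i, q (T i)) * c := Finset.sum_le_sum (fun T _ => this T)
        _ = c := by rw [← Finset.sum_mul, sum_prod_pi q hq1, one_mul]
    have outer : ∑ z, q z * Real.exp (lam * (g z - ∑ z', q z' * g z'))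
        ≤ Real.exp (lam ^ 2 * c ^ 2 / 2) := single_mgf q hq0 hq1 g c lam hgbd
    set Ef : ℝ := ∑ z, q z * g z with hEfdef
    rw [hEf]
    calc ∑ S : Fin (n+1) → Z, (∏ i, q (S i)) * Real.exp (lam * (f S - Ef))
        = ∑ z, ∑ T : Fin n → Z, (q z * ∏ i, q (T i)) * Real.exp (lam * (f (Fin.cons z T) - Ef)) := by
          rw [sum_pi_succ (fun S => (∏ i, q (S i)) * Real.exp (lam * (f S - Ef)))]
          exact Finset.sum_congr rfl (fun z _ => Finset.sum_congr rfl (fun T _ => by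
            rw [prodcons]))
      _ = ∑ z, q z * Real.exp (lam * (g z - Ef)) *
            ∑ T : Fin n → Z, (∏ i, q (T i)) * Real.exp (lam * (f (Fin.cons z T) - g z)) := by
          refine Finset.sum_congr rfl (fun z _ => ?_)
          rw [Finset.mul_sum]
          refine Finset.sum_congr rfl (fun T _ => ?_)
          have hsplit : Real.exp (lam * (f (Fin.cons z T) - Ef))
              = Real.exp (lam * (g z - Ef)) * Real.exp (lam * (f (Fin.cons z T) - g z)) := by
            rw [← Real.exp_add]; ring_nf
          rw [hsplit]; ring
      _ ≤ ∑ z, q z * Real.exp (lam * (g z - Ef)) * Real.exp (n * (lam ^ 2 * c ^ 2 / 2)) := by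
          refine Finset.sum_le_sum (fun z _ => ?_)
          exact mul_le_mul_of_nonneg_left (inner z)
            (mul_nonneg (hq0 z) (Real.exp_nonneg _))
      _ = (∑ z, q z * Real.exp (lam * (g z - Ef))) * Real.exp (n * (lam ^ 2 * c ^ 2 / 2)) := by
          rw [← Finset.sum_mul]
      _ ≤ Real.exp (lam ^ 2 * c ^ 2 / 2) * Real.exp (n * (lam ^ 2 * c ^ 2 / 2)) := by
          refine mul_le_mul_of_nonneg_right ?_ (Real.exp_nonneg _)
          exact outer
      _ = Real.exp ((n + 1 : ℕ) * (lam ^ 2 * c ^ 2 / 2)) := by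
          rw [← Real.exp_add]; push_cast; ring_nf

lemma sampleProb_nonneg {m : ℕ} (q : Z → ℝ) (hq0 : ∀ z, 0 ≤ q z) (E : (Fin m → Z) → Prop) :
    0 ≤ sampleProb m q E := by
  refine Finset.sum_nonneg (fun S _ => ?_)
  split
  · exact Finset.prod_nonneg (fun i _ => hq0 _)
  · exact le_refl 0

lemma sampleProb_mono {m : ℕ} (q : Z → ℝ) (hq0 : ∀ z, 0 ≤ q z)
    {E E' : (Fin m → Z) → Prop} (h : ∀ S, E S → E' S) :
    sampleProb m q E ≤ sampleProb m q E' := by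
  refine Finset.sum_le_sum (fun S _ => ?_)
  by_cases hS : E S
  · rw [if_pos hS, if_pos (h S hS)]
  · rw [if_neg hS]
    split
    · exact Finset.prod_nonneg (fun i _ => hq0 _)
    · exact le_refl 0

lemma sampleProb_compl {m : ℕ} (q : Z → ℝ) (hq1 : ∑ z, q z = 1)
    (E : (Fin m → Z) → Prop) :
    sampleProb m q E = 1 - sampleProb m q (fun S => ¬ E S) := by
  have : sampleProb m q E + sampleProb m q (fun S => ¬ E S) = 1 := by
    rw [sampleProb, sampleProb, ← Finset.sum_add_distrib]
    rw [← sum_prod_pi q hq1 m]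
    refine Finset.sum_congr rfl (fun S _ => ?_)
    by_cases hS : E S
    · rw [if_pos hS, if_neg (not_not_intro hS), add_zero]
    · rw [if_neg hS, if_pos hS, zero_add]
  linarith

/-- Chernoff bound from the McDiarmid MGF estimate. -/
lemma chernoff_tail [Nonempty Z] (q : Z → ℝ) (hq0 : ∀ z, 0 ≤ q z) (hq1 : ∑ z, q z = 1)
    {m : ℕ} (hm : 0 < m) (f : (Fin m → Z) → ℝ) (c : ℝ) (hc : 0 < c)
    (hf : ∀ (S : Fin m → Z) (i : Fin m) (z : Z), f (Function.update S i z) - f S ≤ c)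
    (a t0 : ℝ) (ht0 : 0 < t0)
    (hat : (∑ S : Fin m → Z, (∏ i, q (S i)) * f S) + t0 ≤ a) :
    sampleProb m q (fun S => a < f S) ≤ Real.exp (-(t0 ^ 2) / (2 * m * c ^ 2)) := by
  classical
  set Ef : ℝ := ∑ S : Fin m → Z, (∏ i, q (S i)) * f S with hEf
  set lam : ℝ := t0 / (m * c ^ 2) with hlam
  have hmR : (0 : ℝ) < m := by exact_mod_cast hm
  have hlampos : 0 < lam := by positivity
  have step1 : sampleProb m q (fun S => a < f S)
      ≤ ∑ S : Fin m → Z, (∏ i, q (S i)) * Real.exp (lam * (f S - a)) := by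
    refine Finset.sum_le_sum (fun S _ => ?_)
    by_cases hS : a < f S
    · rw [if_pos hS]
      have h1 : (1 : ℝ) ≤ Real.exp (lam * (f S - a)) := by
        apply Real.one_le_exp
        have : 0 ≤ f S - a := by linarith
        positivity
      nlinarith [Finset.prod_nonneg (fun i (_ : i ∈ Finset.univ) => hq0 (S i))]
    · rw [if_neg hS]
      have := Finset.prod_nonneg (fun i (_ : i ∈ Finset.univ) => hq0 (S i))
      positivity
  have step2 : ∑ S : Fin m → Z, (∏ i, q (S i)) * Real.exp (lam * (f S - a))
      = Real.exp (lam * (Ef - a)) *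
          ∑ S : Fin m → Z, (∏ i, q (S i)) * Real.exp (lam * (f S - Ef)) := by
    rw [Finset.mul_sum]
    refine Finset.sum_congr rfl (fun S _ => ?_)
    rw [show lam * (f S - a) = lam * (Ef - a) + lam * (f S - Ef) by ring, Real.exp_add]
    ring
  have step3 := mcdiarmid_mgf q hq0 hq1 c lam m f hf
  have step4 : Real.exp (lam * (Ef - a)) *
        ∑ S : Fin m → Z, (∏ i, q (S i)) * Real.exp (lam * (f S - Ef))
      ≤ Real.exp (lam * (Ef - a)) * Real.exp (m * (lam ^ 2 * c ^ 2 / 2)) :=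
    mul_le_mul_of_nonneg_left step3 (Real.exp_nonneg _)
  have step5 : Real.exp (lam * (Ef - a)) * Real.exp (m * (lam ^ 2 * c ^ 2 / 2))
      ≤ Real.exp (-(t0 ^ 2) / (2 * m * c ^ 2)) := by
    rw [← Real.exp_add]
    apply Real.exp_le_exp.2
    have hEa : Ef - a ≤ -t0 := by linarith
    have h6 : lam * (Ef - a) ≤ lam * (-t0) :=
      mul_le_mul_of_nonneg_left hEa (le_of_lt hlampos)
    have hid : lam * (-t0) + m * (lam ^ 2 * c ^ 2 / 2) = -(t0 ^ 2) / (2 * m * c ^ 2) := by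
      rw [hlam]; field_simp; ring
    linarith [h6, hid.symm.le, hid.le]
  calc sampleProb m q (fun S => a < f S) ≤ _ := step1
    _ = _ := step2
    _ ≤ _ := step4
    _ ≤ _ := step5

section CondMaxent

variable {X : Type*} {p N : ℕ} [NeZero p]
variable (Φ : X × Fin p → EuclideanSpace ℝ (Fin N))

/-- Partition function. -/
noncomputable def Zx (w : EuclideanSpace ℝ (Fin N)) (x : X) : ℝ :=
  ∑ j, Real.exp ⟪w, Φ (x, j)⟫

lemma Zx_pos (w : EuclideanSpace ℝ (Fin N)) (x : X) : 0 < Zx Φ w x :=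
  Finset.sum_pos (fun j _ => Real.exp_pos _) Finset.univ_nonempty

lemma condMaxent_eq (w : EuclideanSpace ℝ (Fin N)) (v : X × Fin p) :
    condMaxent Φ w v = Real.exp ⟪w, Φ v⟫ / Zx Φ w v.1 := rfl

lemma condMaxent_pos (w : EuclideanSpace ℝ (Fin N)) (v : X × Fin p) :
    0 < condMaxent Φ w v :=
  div_pos (Real.exp_pos _) (Zx_pos Φ w v.1)

lemma condMaxent_sum_one (w : EuclideanSpace ℝ (Fin N)) (x : X) :
    ∑ k, condMaxent Φ w (x, k) = 1 := by
  have : ∑ k, condMaxent Φ w (x, k) = (∑ k, Real.exp ⟪w, Φ (x, k)⟫) / Zx Φ w x := by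
    rw [Finset.sum_div]
    exact Finset.sum_congr rfl (fun k _ => rfl)
  rw [this, Zx]
  exact div_self (ne_of_gt (Zx_pos Φ w x))

/-- The per-point log-loss of conditional maxent. -/
noncomputable def phi (w : EuclideanSpace ℝ (Fin N)) (v : X × Fin p) : ℝ :=
  Real.log (Zx Φ w v.1) - ⟪w, Φ v⟫

lemma log_condMaxent (w : EuclideanSpace ℝ (Fin N)) (v : X × Fin p) :
    Real.log (condMaxent Φ w v) = - phi Φ w v := by
  rw [condMaxent_eq, Real.log_div (ne_of_gt (Real.exp_pos _)) (ne_of_gt (Zx_pos Φ w v.1)),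
    Real.log_exp, phi]
  ring

variable {r : ℝ}

lemma logZx_diff_le (hΦ : ∀ v, ‖Φ v‖ ≤ r) (w w' : EuclideanSpace ℝ (Fin N)) (x : X) :
    Real.log (Zx Φ w x) - Real.log (Zx Φ w' x) ≤ r * ‖w - w'‖ := by
  have key : Zx Φ w x ≤ Real.exp (r * ‖w - w'‖) * Zx Φ w' x := by
    rw [Zx, Zx, Finset.mul_sum]
    refine Finset.sum_le_sum (fun j _ => ?_)
    have h1 : ⟪w, Φ (x, j)⟫ = ⟪w - w', Φ (x, j)⟫ + ⟪w', Φ (x, j)⟫ := by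
      rw [← inner_add_left]; norm_num
    have h2 : ⟪w - w', Φ (x, j)⟫ ≤ r * ‖w - w'‖ := by
      calc ⟪w - w', Φ (x, j)⟫ ≤ ‖w - w'‖ * ‖Φ (x, j)‖ := real_inner_le_norm _ _
        _ ≤ ‖w - w'‖ * r := mul_le_mul_of_nonneg_left (hΦ _) (norm_nonneg _)
        _ = r * ‖w - w'‖ := mul_comm _ _
    rw [h1, Real.exp_add]
    exact mul_le_mul_of_nonneg_right (Real.exp_le_exp.2 h2) (Real.exp_nonneg _)
  have := Real.log_le_log (Zx_pos Φ w x) key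
  rw [Real.log_mul (ne_of_gt (Real.exp_pos _)) (ne_of_gt (Zx_pos Φ w' x)), Real.log_exp] at this
  linarith

lemma phi_diff_le (hΦ : ∀ v, ‖Φ v‖ ≤ r) (w w' : EuclideanSpace ℝ (Fin N)) (v : X × Fin p) :
    phi Φ w v - phi Φ w' v ≤ 2 * r * ‖w - w'‖ := by
  rw [phi, phi]
  have h1 := logZx_diff_le Φ hΦ w w' v.1
  have h2 : ⟪w', Φ v⟫ - ⟪w, Φ v⟫ ≤ r * ‖w - w'‖ := by
    have : ⟪w', Φ v⟫ - ⟪w, Φ v⟫ = ⟪w' - w, Φ v⟫ := by rw [← inner_sub_left]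
    rw [this]
    calc ⟪w' - w, Φ v⟫ ≤ ‖w' - w‖ * ‖Φ v‖ := real_inner_le_norm _ _
      _ ≤ ‖w' - w‖ * r := mul_le_mul_of_nonneg_left (hΦ _) (norm_nonneg _)
      _ = r * ‖w - w'‖ := by rw [norm_sub_rev]; ring
  linarith

/-- Hölder-type inequality for two-term geometric means. -/
lemma sum_geom_mean_le {n : ℕ} [NeZero n] (u v : Fin n → ℝ) (hu : ∀ j, 0 < u j)
    (hv : ∀ j, 0 < v j) (a b : ℝ) (ha : 0 ≤ a) (hb : 0 ≤ b) (hab : a + b = 1) :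
    ∑ j, u j ^ a * v j ^ b ≤ (∑ j, u j) ^ a * (∑ j, v j) ^ b := by
  set A := ∑ j, u j with hA
  set B := ∑ j, v j with hB
  have hApos : 0 < A := Finset.sum_pos (fun j _ => hu j) Finset.univ_nonempty
  have hBpos : 0 < B := Finset.sum_pos (fun j _ => hv j) Finset.univ_nonempty
  have hABpos : 0 < A ^ a * B ^ b :=
    mul_pos (Real.rpow_pos_of_pos hApos a) (Real.rpow_pos_of_pos hBpos b)
  have term : ∀ j, u j ^ a * v j ^ b
      = (u j / A) ^ a * (v j / B) ^ b * (A ^ a * B ^ b) := by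
    intro j
    rw [Real.div_rpow (le_of_lt (hu j)) (le_of_lt hApos),
      Real.div_rpow (le_of_lt (hv j)) (le_of_lt hBpos)]
    field_simp
  have amgm : ∀ j, (u j / A) ^ a * (v j / B) ^ b ≤ a * (u j / A) + b * (v j / B) :=
    fun j => Real.geom_mean_le_arith_mean2_weighted ha hb
      (div_nonneg (le_of_lt (hu j)) (le_of_lt hApos))
      (div_nonneg (le_of_lt (hv j)) (le_of_lt hBpos)) hab
  calc ∑ j, u j ^ a * v j ^ b
      = ∑ j, (u j / A) ^ a * (v j / B) ^ b * (A ^ a * B ^ b) :=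
        Finset.sum_congr rfl (fun j _ => term j)
    _ ≤ ∑ j, (a * (u j / A) + b * (v j / B)) * (A ^ a * B ^ b) :=
        Finset.sum_le_sum (fun j _ => mul_le_mul_of_nonneg_right (amgm j) (le_of_lt hABpos))
    _ = (a * (A / A) + b * (B / B)) * (A ^ a * B ^ b) := by
        rw [← Finset.sum_mul]
        congr 1
        rw [Finset.sum_add_distrib, ← Finset.mul_sum, ← Finset.mul_sum,
          ← Finset.sum_div, ← Finset.sum_div]
    _ = A ^ a * B ^ b := by
        rw [div_self (ne_of_gt hApos), div_self (ne_of_gt hBpos)]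
        rw [mul_one, mul_one, hab, one_mul]

lemma convexOn_logZx (x : X) : ConvexOn ℝ Set.univ (fun w : EuclideanSpace ℝ (Fin N) =>
    Real.log (Zx Φ w x)) := by
  refine ⟨convex_univ, fun w1 _ w2 _ a b ha hb hab => ?_⟩
  simp only [smul_eq_mul]
  have hApos := Zx_pos Φ w1 x
  have hBpos := Zx_pos Φ w2 x
  have key : Zx Φ (a • w1 + b • w2) x ≤ Zx Φ w1 x ^ a * Zx Φ w2 x ^ b := by
    have expand : Zx Φ (a • w1 + b • w2) x
        = ∑ j, Real.exp ⟪w1, Φ (x, j)⟫ ^ a * Real.exp ⟪w2, Φ (x, j)⟫ ^ b := by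
      refine Finset.sum_congr rfl (fun j _ => ?_)
      have hin : ⟪a • w1 + b • w2, Φ (x, j)⟫ = ⟪w1, Φ (x, j)⟫ * a + ⟪w2, Φ (x, j)⟫ * b := by
        rw [inner_add_left, real_inner_smul_left, real_inner_smul_left]; ring
      rw [hin, Real.exp_add, Real.exp_mul, Real.exp_mul]
    rw [expand]
    exact sum_geom_mean_le _ _ (fun j => Real.exp_pos _) (fun j => Real.exp_pos _)
      a b ha hb hab
  calc Real.log (Zx Φ (a • w1 + b • w2) x) ≤ Real.log (Zx Φ w1 x ^ a * Zx Φ w2 x ^ b) :=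
        Real.log_le_log (Zx_pos Φ _ x) key
    _ = a * Real.log (Zx Φ w1 x) + b * Real.log (Zx Φ w2 x) := by
        rw [Real.log_mul (ne_of_gt (Real.rpow_pos_of_pos hApos a))
          (ne_of_gt (Real.rpow_pos_of_pos hBpos b)), Real.log_rpow hApos, Real.log_rpow hBpos]

lemma convexOn_phi (v : X × Fin p) :
    ConvexOn ℝ Set.univ (fun w : EuclideanSpace ℝ (Fin N) => phi Φ w v) := by
  have h1 := convexOn_logZx Φ v.1
  have h2 : ConvexOn ℝ Set.univ (fun w : EuclideanSpace ℝ (Fin N) => - ⟪w, Φ v⟫) := by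
    refine ⟨convex_univ, fun w1 _ w2 _ a b ha hb hab => le_of_eq ?_⟩
    simp only [smul_eq_mul]
    rw [inner_add_left, real_inner_smul_left, real_inner_smul_left]
    ring
  have heq : (fun w : EuclideanSpace ℝ (Fin N) => phi Φ w v)
      = (fun w : EuclideanSpace ℝ (Fin N) => Real.log (Zx Φ w v.1))
        + (fun w : EuclideanSpace ℝ (Fin N) => - ⟪w, Φ v⟫) := by
    funext w
    simp [phi, sub_eq_add_neg]
  rw [heq]
  exact h1.add h2

end CondMaxent

/-- Sums of convex functions over a finset are convex. -/
lemma convexOn_finset_sum {E : Type*} [AddCommGroup E] [Module ℝ E] {ι : Type*}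
    (t : Finset ι) (f : ι → E → ℝ) (h : ∀ i ∈ t, ConvexOn ℝ Set.univ (f i)) :
    ConvexOn ℝ Set.univ (fun w => ∑ i ∈ t, f i w) := by
  classical
  induction t using Finset.induction_on with
  | empty => simpa using convexOn_const (0 : ℝ) convex_univ
  | insert a s hx ih =>
    simp only [Finset.sum_insert hx]
    exact (h a (Finset.mem_insert_self a s)).add
      (ih (fun i hi => h i (Finset.mem_insert_of_mem hi)))

/-- Minimizers of `μ‖·‖² + (convex)` are strong minimizers. -/
lemma strong_min {N : ℕ} {μ : ℝ} (hμ : 0 < μ) (G : EuclideanSpace ℝ (Fin N) → ℝ)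
    (hG : ConvexOn ℝ Set.univ G) (w0 : EuclideanSpace ℝ (Fin N))
    (hmin : ∀ w, μ * ‖w0‖ ^ 2 + G w0 ≤ μ * ‖w‖ ^ 2 + G w) (w : EuclideanSpace ℝ (Fin N)) :
    μ * ‖w0‖ ^ 2 + G w0 + μ * ‖w - w0‖ ^ 2 ≤ μ * ‖w‖ ^ 2 + G w := by
  set D := μ * ‖w‖ ^ 2 + G w - (μ * ‖w0‖ ^ 2 + G w0) with hD
  set I := ⟪w0, w - w0⟫ with hI
  set n2 := ‖w - w0‖ ^ 2 with hn2
  have hn2nn : 0 ≤ n2 := by rw [hn2]; positivity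
  have hw : ‖w‖ ^ 2 = ‖w0‖ ^ 2 + 2 * I + n2 := by
    have : w = w0 + (w - w0) := by abel
    rw [hI, hn2]
    nth_rewrite 1 [this]
    exact norm_add_sq_real w0 (w - w0)
  have claim : ∀ lam : ℝ, 0 < lam → lam ≤ 1 → μ * (1 - lam) * n2 ≤ D := by
    intro lam hl0 hl1
    have hu : w0 + lam • (w - w0) = (1 - lam) • w0 + lam • w := by
      rw [smul_sub, sub_smul, one_smul]; abel
    have hun : ‖w0 + lam • (w - w0)‖ ^ 2 = ‖w0‖ ^ 2 + 2 * lam * I + lam ^ 2 * n2 := by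
      rw [norm_add_sq_real w0 (lam • (w - w0)), real_inner_smul_right, norm_smul, hI, hn2]
      simp [mul_pow, sq_abs]
      ring
    have hGu : G (w0 + lam • (w - w0)) ≤ (1 - lam) * G w0 + lam * G w := by
      rw [hu]
      have := hG.2 (Set.mem_univ w0) (Set.mem_univ w) (by linarith) (le_of_lt hl0)
        (by ring : (1 - lam) + lam = 1)
      simpa [smul_eq_mul] using this
    have h1 := hmin (w0 + lam • (w - w0))
    rw [hun] at h1
    -- h1 : μ‖w0‖² + G w0 ≤ μ(‖w0‖² + 2 lam I + lam² n2) + G(u), G(u) ≤ ...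
    have h2 : μ * ‖w0‖ ^ 2 + G w0
        ≤ μ * (‖w0‖ ^ 2 + 2 * lam * I + lam ^ 2 * n2) + ((1 - lam) * G w0 + lam * G w) := by
      linarith
    have h3 : G w0 ≤ 2 * μ * I + μ * lam * n2 + G w := by
      have := h2
      nlinarith [hl0]
    rw [hD, hw]
    nlinarith [hl0]
  have final : ∀ ε : ℝ, 0 < ε → μ * n2 ≤ D + ε := by
    intro ε hε
    set lam := min 1 (ε / (μ * n2 + 1)) with hlam
    have hpos : 0 < μ * n2 + 1 := by positivity
    have hl0 : 0 < lam := lt_min one_pos (div_pos hε hpos)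
    have hl1 : lam ≤ 1 := min_le_left _ _
    have hcl := claim lam hl0 hl1
    have hbound : μ * lam * n2 ≤ ε := by
      have h4 : lam ≤ ε / (μ * n2 + 1) := min_le_right _ _
      have h5 : μ * n2 ≤ μ * n2 + 1 := by linarith
      have h6 : lam * (μ * n2) ≤ (ε / (μ * n2 + 1)) * (μ * n2 + 1) := by
        apply mul_le_mul h4 h5 (by positivity) (le_of_lt (div_pos hε hpos))
      rw [div_mul_cancel₀ _ (ne_of_gt hpos)] at h6
      linarith
    nlinarith
  have : μ * n2 ≤ D := by
    refine le_of_forall_pos_le_add (fun ε hε => ?_)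
    exact final ε hε
  rw [hD] at this
  linarith

lemma sum_comp_update {α β : Type*} [Fintype α] [DecidableEq α] (f : β → ℝ) (S : α → β)
    (i : α) (z : β) :
    ∑ j, f (Function.update S i z j) = f z + ∑ j ∈ Finset.univ \ {i}, f (S j) := by
  rw [Finset.sum_eq_sum_sdiff_singleton_add (Finset.mem_univ i)
    (fun j => f (Function.update S i z j)), Function.update_self]
  rw [Finset.sum_congr rfl (fun j hj => by
    rw [Function.update_of_ne (Finset.notMem_singleton.1 (Finset.mem_sdiff.1 hj).2) _ _])]
  ring

lemma sum_comp_self {α β : Type*} [Fintype α] [DecidableEq α] (f : β → ℝ) (S : α → β) (i : α) :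
    ∑ j, f (S j) = f (S i) + ∑ j ∈ Finset.univ \ {i}, f (S j) := by
  rw [Finset.sum_eq_sum_sdiff_singleton_add (Finset.mem_univ i) (fun j => f (S j))]
  ring

section Stability

variable {X : Type*} [Fintype X] {p N : ℕ} [NeZero p]
variable (Φ : X × Fin p → EuclideanSpace ℝ (Fin N)) {r μ : ℝ} {m : ℕ}

/-- Convexity of the empirical (and population) negative log-likelihood. -/
lemma convexOn_emp (c : ℝ) (hc : 0 ≤ c) {ι : Type*} [Fintype ι] (a : ι → ℝ)
    (ha : ∀ i, 0 ≤ a i) (V : ι → X × Fin p) :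
    ConvexOn ℝ Set.univ (fun w : EuclideanSpace ℝ (Fin N) =>
      c * ∑ i, a i * phi Φ w (V i)) := by
  have h1 : ConvexOn ℝ Set.univ (fun w : EuclideanSpace ℝ (Fin N) =>
      ∑ i, a i * phi Φ w (V i)) := by
    have := convexOn_finset_sum (Finset.univ : Finset ι)
      (fun i (w : EuclideanSpace ℝ (Fin N)) => a i * phi Φ w (V i))
      (fun i _ => by
        have hconv := convexOn_phi Φ (V i)
        have := hconv.smul (ha i)
        simpa [smul_eq_mul] using this)
    simpa using this
  have := h1.smul hc
  simpa [smul_eq_mul] using this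

/-- Uniform stability of regularized conditional maxent. -/
lemma stability (hr : 0 < r) (hμ : 0 < μ) (hm : 0 < m) (hΦ : ∀ v, ‖Φ v‖ ≤ r)
    (what : (Fin m → X × Fin p) → EuclideanSpace ℝ (Fin N))
    (hhat : ∀ (S : Fin m → X × Fin p) (w : EuclideanSpace ℝ (Fin N)),
      μ * ‖what S‖ ^ 2 + (1 / (m : ℝ)) * ∑ i, phi Φ (what S) (S i)
        ≤ μ * ‖w‖ ^ 2 + (1 / (m : ℝ)) * ∑ i, phi Φ w (S i))
    (S : Fin m → X × Fin p) (i : Fin m) (z : X × Fin p) :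
    ‖what (Function.update S i z) - what S‖ ≤ 2 * r / (μ * m) := by
  classical
  set S' := Function.update S i z with hS'
  set w1 := what S with hw1
  set w2 := what S' with hw2
  set d := ‖w2 - w1‖ with hd
  have hmR : (0 : ℝ) < m := by exact_mod_cast hm
  have hGS : ConvexOn ℝ Set.univ (fun w : EuclideanSpace ℝ (Fin N) =>
      (1 / (m : ℝ)) * ∑ i, phi Φ w (S i)) := by
    have := convexOn_emp Φ (1 / (m : ℝ)) (by positivity) (fun _ => (1 : ℝ))
      (fun _ => zero_le_one) S
    simpa using this
  have hGS' : ConvexOn ℝ Set.univ (fun w : EuclideanSpace ℝ (Fin N) =>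
      (1 / (m : ℝ)) * ∑ i, phi Φ w (S' i)) := by
    have := convexOn_emp Φ (1 / (m : ℝ)) (by positivity) (fun _ => (1 : ℝ))
      (fun _ => zero_le_one) S'
    simpa using this
  have h1 := strong_min hμ _ hGS w1 (hhat S) w2
  have h2 := strong_min hμ _ hGS' w2 (hhat S') w1
  rw [show ‖w1 - w2‖ = d by rw [hd, norm_sub_rev]] at h2
  -- difference of empirical objectives at a fixed w
  have hdiff : ∀ w : EuclideanSpace ℝ (Fin N),
      (∑ j, phi Φ w (S j)) - (∑ j, phi Φ w (S' j)) = phi Φ w (S i) - phi Φ w z := by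
    intro w
    rw [hS', sum_comp_update (fun v => phi Φ w v) S i z,
      sum_comp_self (fun v => phi Φ w v) S i]
    ring
  have e1' : (1 / (m : ℝ)) * ∑ j, phi Φ w1 (S j) - (1 / (m : ℝ)) * ∑ j, phi Φ w1 (S' j)
      = (1 / (m : ℝ)) * (phi Φ w1 (S i) - phi Φ w1 z) := by
    rw [← mul_sub, hdiff w1]
  have e2' : (1 / (m : ℝ)) * ∑ j, phi Φ w2 (S j) - (1 / (m : ℝ)) * ∑ j, phi Φ w2 (S' j)
      = (1 / (m : ℝ)) * (phi Φ w2 (S i) - phi Φ w2 z) := by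
    rw [← mul_sub, hdiff w2]
  have hkey : 2 * μ * d ^ 2 ≤ (1 / (m : ℝ)) * (phi Φ w2 (S i) - phi Φ w2 z)
      - (1 / (m : ℝ)) * (phi Φ w1 (S i) - phi Φ w1 z) := by
    linarith [h1, h2, e1', e2']
  have hlip : (phi Φ w2 (S i) - phi Φ w2 z) - (phi Φ w1 (S i) - phi Φ w1 z) ≤ 4 * r * d := by
    have l1 : phi Φ w2 (S i) - phi Φ w1 (S i) ≤ 2 * r * d := by
      have := phi_diff_le Φ hΦ w2 w1 (S i)
      rw [show ‖w2 - w1‖ = d from rfl] at this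
      linarith
    have l2 : phi Φ w1 z - phi Φ w2 z ≤ 2 * r * d := by
      have := phi_diff_le Φ hΦ w1 w2 z
      rw [norm_sub_rev, show ‖w2 - w1‖ = d from rfl] at this
      linarith
    linarith
  have hfinal : 2 * μ * d ^ 2 ≤ (4 * r / m) * d := by
    have h3 : (1 / (m : ℝ)) * (phi Φ w2 (S i) - phi Φ w2 z)
          - (1 / (m : ℝ)) * (phi Φ w1 (S i) - phi Φ w1 z)
        ≤ (1 / (m : ℝ)) * (4 * r * d) := by
      rw [← mul_sub]
      apply mul_le_mul_of_nonneg_left hlip (by positivity)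
    calc 2 * μ * d ^ 2 ≤ _ := hkey
      _ ≤ (1 / (m : ℝ)) * (4 * r * d) := h3
      _ = (4 * r / m) * d := by ring
  have hdnn : 0 ≤ d := norm_nonneg _
  rcases eq_or_lt_of_le hdnn with h0 | hpos
  · rw [← h0]; positivity
  · rw [le_div_iff₀ (by positivity : (0 : ℝ) < μ * m)]
    have hstep : 2 * μ * d ^ 2 * m ≤ 4 * r * d := by
      have := mul_le_mul_of_nonneg_right hfinal (le_of_lt hmR)
      calc 2 * μ * d ^ 2 * m ≤ (4 * r / m) * d * m := this
        _ = 4 * r * d := by field_simp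
    nlinarith [hstep, hpos, hμ, hmR]

/-- Expected squared deviation of the empirical solution from the population one. -/
lemma exp_psi_sq (hr : 0 < r) (hμ : 0 < μ) (hm : 0 < m) (hΦ : ∀ v, ‖Φ v‖ ≤ r)
    (q : X × Fin p → ℝ) (hq0 : ∀ v, 0 ≤ q v) (hq1 : ∑ v, q v = 1)
    (what : (Fin m → X × Fin p) → EuclideanSpace ℝ (Fin N))
    (hhat : ∀ (S : Fin m → X × Fin p) (w : EuclideanSpace ℝ (Fin N)),
      μ * ‖what S‖ ^ 2 + (1 / (m : ℝ)) * ∑ i, phi Φ (what S) (S i)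
        ≤ μ * ‖w‖ ^ 2 + (1 / (m : ℝ)) * ∑ i, phi Φ w (S i))
    (wstar : EuclideanSpace ℝ (Fin N))
    (hstar : ∀ w : EuclideanSpace ℝ (Fin N),
      μ * ‖wstar‖ ^ 2 + ∑ v, q v * phi Φ wstar v
        ≤ μ * ‖w‖ ^ 2 + ∑ v, q v * phi Φ w v) :
    ∑ S : Fin m → X × Fin p, (∏ j, q (S j)) * ‖what S - wstar‖ ^ 2
      ≤ 2 * r ^ 2 / (μ ^ 2 * m) := by
  classical
  have hmR : (0 : ℝ) < m := by exact_mod_cast hm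
  set W : (Fin m → X × Fin p) → ℝ := fun S => ∏ j, q (S j) with hW
  have hW0 : ∀ S, 0 ≤ W S := fun S => Finset.prod_nonneg (fun j _ => hq0 _)
  have hW1 : ∑ S : Fin m → X × Fin p, W S = 1 := sum_prod_pi q hq1 m
  set P : EuclideanSpace ℝ (Fin N) → ℝ := fun w => ∑ v, q v * phi Φ w v with hP
  -- pointwise key inequality
  have key : ∀ S : Fin m → X × Fin p,
      2 * μ * ‖what S - wstar‖ ^ 2
        ≤ ((1 / (m : ℝ)) * ∑ i, phi Φ wstar (S i) - P wstar)
          + (P (what S) - (1 / (m : ℝ)) * ∑ i, phi Φ (what S) (S i)) := by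
    intro S
    have hGS : ConvexOn ℝ Set.univ (fun w : EuclideanSpace ℝ (Fin N) =>
        (1 / (m : ℝ)) * ∑ i, phi Φ w (S i)) := by
      have := convexOn_emp Φ (1 / (m : ℝ)) (by positivity) (fun _ => (1 : ℝ))
        (fun _ => zero_le_one) S
      simpa using this
    have hGP : ConvexOn ℝ Set.univ P := by
      have := convexOn_emp Φ (1 : ℝ) zero_le_one q hq0 id
      simpa [hP] using this
    have h1 := strong_min hμ _ hGS (what S) (hhat S) wstar
    have h2 := strong_min hμ P hGP wstar hstar (what S)
    rw [show ‖wstar - what S‖ = ‖what S - wstar‖ from norm_sub_rev _ _] at h1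
    linarith
  -- expectation of the first (centered) term vanishes
  have hA : ∑ S : Fin m → X × Fin p,
      W S * ((1 / (m : ℝ)) * ∑ i, phi Φ wstar (S i) - P wstar) = 0 := by
    have e1 : ∑ S : Fin m → X × Fin p, W S * ((1 / (m : ℝ)) * ∑ i, phi Φ wstar (S i))
        = (1 / (m : ℝ)) * ∑ i : Fin m, ∑ S : Fin m → X × Fin p, W S * phi Φ wstar (S i) := by
      calc ∑ S : Fin m → X × Fin p, W S * ((1 / (m : ℝ)) * ∑ i, phi Φ wstar (S i))
          = ∑ S : Fin m → X × Fin p, ∑ i : Fin m,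
              (1 / (m : ℝ)) * (W S * phi Φ wstar (S i)) := by
            refine Finset.sum_congr rfl (fun S _ => ?_)
            rw [Finset.mul_sum, Finset.mul_sum]
            exact Finset.sum_congr rfl (fun i _ => by ring)
        _ = ∑ i : Fin m, ∑ S : Fin m → X × Fin p,
              (1 / (m : ℝ)) * (W S * phi Φ wstar (S i)) := Finset.sum_comm
        _ = (1 / (m : ℝ)) * ∑ i : Fin m, ∑ S : Fin m → X × Fin p,
              W S * phi Φ wstar (S i) := by
            rw [Finset.mul_sum]
            exact Finset.sum_congr rfl (fun i _ => by rw [Finset.mul_sum])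
    have e2 : ∀ i : Fin m, ∑ S : Fin m → X × Fin p, W S * phi Φ wstar (S i) = P wstar := by
      intro i
      exact exp_coord q hq1 i (fun v => phi Φ wstar v)
    have e3 : ∑ S : Fin m → X × Fin p, W S * P wstar = P wstar := by
      rw [← Finset.sum_mul, hW1, one_mul]
    have e4 : ∑ S : Fin m → X × Fin p, W S * ((1 / (m : ℝ)) * ∑ i, phi Φ wstar (S i) - P wstar)
        = ∑ S : Fin m → X × Fin p, W S * ((1 / (m : ℝ)) * ∑ i, phi Φ wstar (S i))
          - ∑ S : Fin m → X × Fin p, W S * P wstar := by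
      rw [← Finset.sum_sub_distrib]
      exact Finset.sum_congr rfl (fun S _ => by ring)
    rw [e4, e1, Finset.sum_congr rfl (fun i _ => e2 i), e3, Finset.sum_const,
      Finset.card_univ, Fintype.card_fin, nsmul_eq_mul]
    field_simp
    ring
  -- expectation of the generalization gap is bounded via stability
  have hB : ∑ S : Fin m → X × Fin p,
      W S * (P (what S) - (1 / (m : ℝ)) * ∑ i, phi Φ (what S) (S i))
        ≤ 4 * r ^ 2 / (μ * m) := by
    have hc := stability Φ hr hμ hm hΦ what hhat
    -- rewrite as an average over coordinates
    have per : ∀ S : Fin m → X × Fin p,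
        W S * (P (what S) - (1 / (m : ℝ)) * ∑ i, phi Φ (what S) (S i))
          = (1 / (m : ℝ)) * ∑ i : Fin m,
              (W S * P (what S) - W S * phi Φ (what S) (S i)) := by
      intro S
      rw [Finset.sum_sub_distrib, Finset.sum_const, Finset.card_univ, Fintype.card_fin,
        nsmul_eq_mul, ← Finset.mul_sum]
      have hmne : (m : ℝ) ≠ 0 := ne_of_gt hmR
      field_simp
    have e5 : ∑ S : Fin m → X × Fin p,
        W S * (P (what S) - (1 / (m : ℝ)) * ∑ i, phi Φ (what S) (S i))
          = (1 / (m : ℝ)) * ∑ i : Fin m, (∑ S : Fin m → X × Fin p, W S * P (what S)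
              - ∑ S : Fin m → X × Fin p, W S * phi Φ (what S) (S i)) := by
      calc ∑ S : Fin m → X × Fin p,
          W S * (P (what S) - (1 / (m : ℝ)) * ∑ i, phi Φ (what S) (S i))
          = ∑ S : Fin m → X × Fin p, (1 / (m : ℝ)) * ∑ i : Fin m,
              (W S * P (what S) - W S * phi Φ (what S) (S i)) :=
            Finset.sum_congr rfl (fun S _ => per S)
        _ = (1 / (m : ℝ)) * ∑ S : Fin m → X × Fin p, ∑ i : Fin m,
              (W S * P (what S) - W S * phi Φ (what S) (S i)) := by
            rw [Finset.mul_sum]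
        _ = (1 / (m : ℝ)) * ∑ i : Fin m, ∑ S : Fin m → X × Fin p,
              (W S * P (what S) - W S * phi Φ (what S) (S i)) := by
            rw [Finset.sum_comm]
        _ = _ := by
            congr 1
            exact Finset.sum_congr rfl (fun i _ => by rw [Finset.sum_sub_distrib])
    have hi : ∀ i : Fin m, ∑ S : Fin m → X × Fin p, W S * P (what S)
        - ∑ S : Fin m → X × Fin p, W S * phi Φ (what S) (S i) ≤ 4 * r ^ 2 / (μ * m) := by
      intro i
      have g1 : ∑ S : Fin m → X × Fin p, W S * P (what S)
          = ∑ S : Fin m → X × Fin p, ∑ z, (∏ j, q (S j)) * q z * phi Φ (what S) z := by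
        refine Finset.sum_congr rfl (fun S _ => ?_)
        rw [hP]
        simp only [hW]
        rw [Finset.mul_sum]
        exact Finset.sum_congr rfl (fun z _ => by ring)
      have g2 : ∑ S : Fin m → X × Fin p, W S * phi Φ (what S) (S i)
          = ∑ S : Fin m → X × Fin p, ∑ z, (∏ j, q (S j)) * q z * phi Φ (what S) (S i) := by
        refine Finset.sum_congr rfl (fun S _ => ?_)
        have : ∑ z, (∏ j, q (S j)) * q z * phi Φ (what S) (S i)
            = (∑ z, q z) * ((∏ j, q (S j)) * phi Φ (what S) (S i)) := by
          rw [Finset.sum_mul]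
          exact Finset.sum_congr rfl (fun z _ => by ring)
        rw [this, hq1, one_mul]
      have g3 := invol_sum q i (fun S z => phi Φ (what S) z)
      have pointwise : ∀ (S : Fin m → X × Fin p) (z : X × Fin p),
          phi Φ (what (Function.update S i z)) (S i) - phi Φ (what S) (S i)
            ≤ 4 * r ^ 2 / (μ * m) := by
        intro S z
        have l1 := phi_diff_le Φ hΦ (what (Function.update S i z)) (what S) (S i)
        have l2 := hc S i z
        have l3 : 2 * r * ‖what (Function.update S i z) - what S‖
            ≤ 2 * r * (2 * r / (μ * m)) :=
          mul_le_mul_of_nonneg_left l2 (by positivity)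
        have l4 : 2 * r * (2 * r / (μ * m)) = 4 * r ^ 2 / (μ * m) := by
          field_simp
          ring
        linarith
      have wnonneg : ∀ (S : Fin m → X × Fin p) (z : X × Fin p),
          0 ≤ (∏ j, q (S j)) * q z :=
        fun S z => mul_nonneg (Finset.prod_nonneg (fun j _ => hq0 _)) (hq0 z)
      have wtotal : ∑ S : Fin m → X × Fin p, ∑ z, (∏ j, q (S j)) * q z = 1 := by
        have : ∀ S : Fin m → X × Fin p, ∑ z, (∏ j, q (S j)) * q z = ∏ j, q (S j) := by
          intro S
          rw [← Finset.mul_sum, hq1, mul_one]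
        rw [Finset.sum_congr rfl (fun S _ => this S)]
        exact sum_prod_pi q hq1 m
      calc ∑ S : Fin m → X × Fin p, W S * P (what S)
            - ∑ S : Fin m → X × Fin p, W S * phi Φ (what S) (S i)
          = ∑ S : Fin m → X × Fin p, ∑ z, (∏ j, q (S j)) * q z
              * phi Φ (what (Function.update S i z)) (S i)
            - ∑ S : Fin m → X × Fin p, ∑ z, (∏ j, q (S j)) * q z
              * phi Φ (what S) (S i) := by rw [g1, g3, g2]
        _ = ∑ S : Fin m → X × Fin p, ∑ z, ((∏ j, q (S j)) * q z)
              * (phi Φ (what (Function.update S i z)) (S i) - phi Φ (what S) (S i)) := by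
            rw [← Finset.sum_sub_distrib]
            refine Finset.sum_congr rfl (fun S _ => ?_)
            rw [← Finset.sum_sub_distrib]
            exact Finset.sum_congr rfl (fun z _ => by ring)
        _ ≤ ∑ S : Fin m → X × Fin p, ∑ z, ((∏ j, q (S j)) * q z) * (4 * r ^ 2 / (μ * m)) := by
            refine Finset.sum_le_sum (fun S _ => Finset.sum_le_sum (fun z _ => ?_))
            exact mul_le_mul_of_nonneg_left (pointwise S z) (wnonneg S z)
        _ = 4 * r ^ 2 / (μ * m) := by
            rw [show ∑ S : Fin m → X × Fin p, ∑ z, ((∏ j, q (S j)) * q z) * (4 * r ^ 2 / (μ * m))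
                = (∑ S : Fin m → X × Fin p, ∑ z, (∏ j, q (S j)) * q z) * (4 * r ^ 2 / (μ * m)) by
              rw [Finset.sum_mul]
              exact Finset.sum_congr rfl (fun S _ => by rw [Finset.sum_mul])]
            rw [wtotal, one_mul]
    rw [e5]
    calc (1 / (m : ℝ)) * ∑ i : Fin m, (∑ S : Fin m → X × Fin p, W S * P (what S)
          - ∑ S : Fin m → X × Fin p, W S * phi Φ (what S) (S i))
        ≤ (1 / (m : ℝ)) * ∑ i : Fin m, (4 * r ^ 2 / (μ * m)) := by
          apply mul_le_mul_of_nonneg_left (Finset.sum_le_sum (fun i _ => hi i)) (by positivity)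
      _ = 4 * r ^ 2 / (μ * m) := by
          rw [Finset.sum_const, Finset.card_univ, Fintype.card_fin, nsmul_eq_mul]
          field_simp
  -- combine
  have main : 2 * μ * ∑ S : Fin m → X × Fin p, W S * ‖what S - wstar‖ ^ 2
      ≤ 4 * r ^ 2 / (μ * m) := by
    have split : ∑ S : Fin m → X × Fin p, W S * (2 * μ * ‖what S - wstar‖ ^ 2)
        ≤ ∑ S : Fin m → X × Fin p,
            W S * ((1 / (m : ℝ)) * ∑ i, phi Φ wstar (S i) - P wstar)
          + ∑ S : Fin m → X × Fin p,
            W S * (P (what S) - (1 / (m : ℝ)) * ∑ i, phi Φ (what S) (S i)) := by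
      rw [← Finset.sum_add_distrib]
      refine Finset.sum_le_sum (fun S _ => ?_)
      rw [← mul_add]
      exact mul_le_mul_of_nonneg_left (key S) (hW0 S)
    have pull : ∑ S : Fin m → X × Fin p, W S * (2 * μ * ‖what S - wstar‖ ^ 2)
        = 2 * μ * ∑ S : Fin m → X × Fin p, W S * ‖what S - wstar‖ ^ 2 := by
      rw [Finset.mul_sum]
      exact Finset.sum_congr rfl (fun S _ => by ring)
    rw [← pull]
    calc ∑ S : Fin m → X × Fin p, W S * (2 * μ * ‖what S - wstar‖ ^ 2) ≤ _ := split
      _ ≤ 4 * r ^ 2 / (μ * m) := by rw [hA]; linarith [hB]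
  have hdiv : (4 * r ^ 2 / (μ * m)) / (2 * μ) = 2 * r ^ 2 / (μ ^ 2 * m) := by
    field_simp
    ring
  have : ∑ S : Fin m → X × Fin p, W S * ‖what S - wstar‖ ^ 2
      ≤ (4 * r ^ 2 / (μ * m)) / (2 * μ) := by
    rw [le_div_iff₀ (by positivity : (0 : ℝ) < 2 * μ)]
    linarith
  rw [hdiv] at this
  exact this

end Stability

lemma exp_le_sqrt {ι : Type*} [Fintype ι] (w f : ι → ℝ) (hw0 : ∀ i, 0 ≤ w i)
    (hw1 : ∑ i, w i = 1) (hf0 : ∀ i, 0 ≤ f i) :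
    ∑ i, w i * f i ≤ Real.sqrt (∑ i, w i * f i ^ 2) := by
  have cs := Finset.sum_mul_sq_le_sq_mul_sq Finset.univ
    (fun i => Real.sqrt (w i)) (fun i => Real.sqrt (w i) * f i)
  have e1 : ∀ i, Real.sqrt (w i) * (Real.sqrt (w i) * f i) = w i * f i := by
    intro i
    rw [← mul_assoc, Real.mul_self_sqrt (hw0 i)]
  have e2 : ∀ i, Real.sqrt (w i) ^ 2 = w i := fun i => Real.sq_sqrt (hw0 i)
  have e3 : ∀ i, (Real.sqrt (w i) * f i) ^ 2 = w i * f i ^ 2 := by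
    intro i
    rw [mul_pow, e2 i]
  rw [Finset.sum_congr rfl (fun i _ => e1 i), Finset.sum_congr rfl (fun i _ => e2 i),
    Finset.sum_congr rfl (fun i _ => e3 i), hw1, one_mul] at cs
  have hnn : 0 ≤ ∑ i, w i * f i :=
    Finset.sum_nonneg (fun i _ => mul_nonneg (hw0 i) (hf0 i))
  calc ∑ i, w i * f i = Real.sqrt ((∑ i, w i * f i) ^ 2) := (Real.sqrt_sq hnn).symm
    _ ≤ Real.sqrt (∑ i, w i * f i ^ 2) := Real.sqrt_le_sqrt cs

section Tail

variable {X : Type*} [Fintype X] [Nonempty X] {p N : ℕ} [NeZero p]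
variable (Φ : X × Fin p → EuclideanSpace ℝ (Fin N)) {r μ : ℝ} {m : ℕ}

/-- Tail bound for the deviation of the empirical maxent solution. -/
lemma psi_tail (hr : 0 < r) (hμ : 0 < μ) (hm : 0 < m) (hΦ : ∀ v, ‖Φ v‖ ≤ r)
    (q : X × Fin p → ℝ) (hq0 : ∀ v, 0 ≤ q v) (hq1 : ∑ v, q v = 1)
    (what : (Fin m → X × Fin p) → EuclideanSpace ℝ (Fin N))
    (hhat : ∀ (S : Fin m → X × Fin p) (w : EuclideanSpace ℝ (Fin N)),
      μ * ‖what S‖ ^ 2 + (1 / (m : ℝ)) * ∑ i, phi Φ (what S) (S i)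
        ≤ μ * ‖w‖ ^ 2 + (1 / (m : ℝ)) * ∑ i, phi Φ w (S i))
    (wstar : EuclideanSpace ℝ (Fin N))
    (hstar : ∀ w : EuclideanSpace ℝ (Fin N),
      μ * ‖wstar‖ ^ 2 + ∑ v, q v * phi Φ wstar v
        ≤ μ * ‖w‖ ^ 2 + ∑ v, q v * phi Φ w v)
    {δ : ℝ} (hδ0 : 0 < δ) (hδ1 : δ < 1) :
    sampleProb m q (fun S =>
        3 * Real.sqrt 2 * r / (μ * Real.sqrt m) * (1 + Real.sqrt (Real.log (1 / δ)))
          < ‖what S - wstar‖) ≤ δ := by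
  classical
  have hmR : (0 : ℝ) < m := by exact_mod_cast hm
  have hsm : (0 : ℝ) < Real.sqrt m := Real.sqrt_pos.2 hmR
  have hms : Real.sqrt m * Real.sqrt m = (m : ℝ) := Real.mul_self_sqrt (le_of_lt hmR)
  set L := Real.log (1 / δ) with hLdef
  have hL : 0 < L := Real.log_pos (one_lt_one_div hδ0 hδ1)
  have hsL : 0 < Real.sqrt L := Real.sqrt_pos.2 hL
  set c : ℝ := 2 * r / (μ * m) with hcdef
  have hc : 0 < c := by positivity
  set f : (Fin m → X × Fin p) → ℝ := fun S => ‖what S - wstar‖ with hfdef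
  have hbd : ∀ (S : Fin m → X × Fin p) (i : Fin m) (z : X × Fin p),
      f (Function.update S i z) - f S ≤ c := by
    intro S i z
    have h1 : f (Function.update S i z) - f S
        ≤ ‖what (Function.update S i z) - what S‖ := by
      have := norm_sub_norm_le (what (Function.update S i z) - wstar) (what S - wstar)
      rw [sub_sub_sub_cancel_right] at this
      exact this
    exact le_trans h1 (stability Φ hr hμ hm hΦ what hhat S i z)
  set t0 : ℝ := c * Real.sqrt (2 * m * L) with ht0def
  have ht0 : 0 < t0 := mul_pos hc (Real.sqrt_pos.2 (by positivity))
  set a : ℝ := 3 * Real.sqrt 2 * r / (μ * Real.sqrt m) * (1 + Real.sqrt L) with hadef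
  -- E[f] ≤ √2 r / (μ √m)
  have hEf : ∑ S : Fin m → X × Fin p, (∏ i, q (S i)) * f S
      ≤ Real.sqrt 2 * r / (μ * Real.sqrt m) := by
    have h1 := exp_le_sqrt (fun S : Fin m → X × Fin p => ∏ i, q (S i)) f
      (fun S => Finset.prod_nonneg (fun i _ => hq0 _)) (sum_prod_pi q hq1 m)
      (fun S => norm_nonneg _)
    have h2 := exp_psi_sq Φ hr hμ hm hΦ q hq0 hq1 what hhat wstar hstar
    have h3 : Real.sqrt (∑ S : Fin m → X × Fin p, (∏ i, q (S i)) * f S ^ 2)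
        ≤ Real.sqrt (2 * r ^ 2 / (μ ^ 2 * m)) := Real.sqrt_le_sqrt h2
    have h4 : Real.sqrt (2 * r ^ 2 / (μ ^ 2 * m)) = Real.sqrt 2 * r / (μ * Real.sqrt m) := by
      rw [show 2 * r ^ 2 / (μ ^ 2 * (m : ℝ)) = (Real.sqrt 2 * r / (μ * Real.sqrt m)) ^ 2 by
        rw [div_pow, mul_pow, mul_pow, Real.sq_sqrt (by norm_num : (0:ℝ) ≤ 2),
          Real.sq_sqrt (le_of_lt hmR)]]
      exact Real.sqrt_sq (by positivity)
    calc ∑ S : Fin m → X × Fin p, (∏ i, q (S i)) * f S ≤ _ := h1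
      _ ≤ _ := h3
      _ = _ := h4
  -- t0 in closed form
  have ht0eq : t0 = 2 * Real.sqrt 2 * r * Real.sqrt L / (μ * Real.sqrt m) := by
    rw [ht0def, hcdef]
    rw [show (2 * (m : ℝ) * L) = 2 * m * L from rfl,
      Real.sqrt_mul (by positivity : (0:ℝ) ≤ 2 * m) L,
      Real.sqrt_mul (by norm_num : (0:ℝ) ≤ 2) (m : ℝ)]
    rw [div_mul_eq_mul_div, div_eq_div_iff (by positivity) (by positivity)]
    conv_rhs => rw [← hms]
    ring
  -- E[f] + t0 ≤ a
  have hat : (∑ S : Fin m → X × Fin p, (∏ i, q (S i)) * f S) + t0 ≤ a := by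
    rw [hadef, ht0eq]
    have hβ : 0 < r / (μ * Real.sqrt m) := by positivity
    have e1 : 3 * Real.sqrt 2 * r / (μ * Real.sqrt m) * (1 + Real.sqrt L)
        = 3 * Real.sqrt 2 * (r / (μ * Real.sqrt m)) * (1 + Real.sqrt L) := by ring
    have e2 : 2 * Real.sqrt 2 * r * Real.sqrt L / (μ * Real.sqrt m)
        = 2 * Real.sqrt 2 * (r / (μ * Real.sqrt m)) * Real.sqrt L := by ring
    have e3 : Real.sqrt 2 * r / (μ * Real.sqrt m)
        = Real.sqrt 2 * (r / (μ * Real.sqrt m)) := by ring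
    rw [e1, e2]
    rw [e3] at hEf
    nlinarith [hEf, Real.sqrt_nonneg L, Real.sqrt_nonneg (2:ℝ), hβ,
      Real.sq_sqrt (by norm_num : (0:ℝ) ≤ 2)]
  have hcher := chernoff_tail q hq0 hq1 hm f c hc hbd a t0 ht0 hat
  have hval : Real.exp (-(t0 ^ 2) / (2 * m * c ^ 2)) = δ := by
    have ht0sq : t0 ^ 2 = c ^ 2 * (2 * m * L) := by
      rw [ht0def, mul_pow, Real.sq_sqrt (by positivity : (0:ℝ) ≤ 2 * m * L)]
    rw [ht0sq, show -(c ^ 2 * (2 * (m:ℝ) * L)) / (2 * m * c ^ 2) = -L by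
      field_simp]
    rw [hLdef, one_div, Real.log_inv, neg_neg, Real.exp_log hδ0]
  rw [← hval]
  exact le_trans (le_of_eq (by rw [hadef])) hcher

end Tail

section Det

variable {X Y : Type*} [Fintype X] [Nonempty X] [Fintype Y] {p N : ℕ} [NeZero p]

/-- Deterministic bound for the distribution-weighted combination with uniform `z`. -/
lemma det_bound
    (Dm : Fin p → X → ℝ) (hDmpos : ∀ k x, 0 < Dm k x)
    (C : X → Y → ℝ) (hC0 : ∀ x y, 0 ≤ C x y)
    (ℓ : ℝ → Y → ℝ) (hconv : ∀ y, ConvexOn ℝ Set.univ fun t => ℓ t y)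
    (hℓ0 : ∀ t y, 0 ≤ ℓ t y)
    (ε : ℝ) (h : Fin p → X → ℝ)
    (hacc : ∀ k, expLoss ℓ (fun v => Dm k v.1 * C v.1 v.2) (h k) ≤ ε)
    (Φ : X × Fin p → EuclideanSpace ℝ (Fin N)) {r : ℝ} (hr : 0 < r)
    (hΦ : ∀ v, ‖Φ v‖ ≤ r) (wstar wS : EuclideanSpace ℝ (Fin N))
    (a : ℝ) (ha : ‖wS - wstar‖ ≤ a)
    (lam : Fin p → ℝ) (hlam : lam ∈ stdSimplex ℝ (Fin p)) :
    expLoss ℓ (fun v : X × Y => ∑ k, lam k * (Dm k v.1 * C v.1 v.2))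
        (weightedComb (fun k x => condMaxent Φ wS (x, k)) h (fun _ => 1 / (p : ℝ)))
      ≤ ε * p * Real.exp (2 * r * a) *
        (⨆ x : X, ⨆ k : Fin p, condMaxent Φ wstar (x, k) / (Dm k x / ∑ j, Dm j x)) := by
  classical
  have hpR : (0 : ℝ) < p := by
    have := Nat.pos_of_ne_zero (NeZero.ne p)
    exact_mod_cast this
  set E : ℝ := Real.exp (2 * r * a) with hE
  have hEpos : 0 < E := Real.exp_pos _
  set Qh : Fin p → X → ℝ := fun k x => condMaxent Φ wS (x, k) with hQh
  set Qs : Fin p → X → ℝ := fun k x => condMaxent Φ wstar (x, k) with hQs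
  set Qc : Fin p → X → ℝ := fun k x => Dm k x / ∑ j, Dm j x with hQc
  set dstar : ℝ := ⨆ x : X, ⨆ k : Fin p, condMaxent Φ wstar (x, k) / (Dm k x / ∑ j, Dm j x)
    with hdstar
  have hQcpos : ∀ k x, 0 < Qc k x := fun k x =>
    div_pos (hDmpos k x) (Finset.sum_pos (fun j _ => hDmpos j x) Finset.univ_nonempty)
  have hdnn : 0 ≤ dstar := by
    rw [hdstar]
    apply Real.iSup_nonneg
    intro x
    apply Real.iSup_nonneg
    intro k
    exact le_of_lt (div_pos (condMaxent_pos Φ wstar (x, k)) (hQcpos k x))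
  -- uniform weights collapse to the conditional maxent weights
  have hg : ∀ x : X, weightedComb Qh h (fun _ => 1 / (p : ℝ)) x = ∑ k, Qh k x * h k x := by
    intro x
    rw [weightedComb]
    have hden : ∑ j, (1 / (p : ℝ)) * Qh j x = 1 / (p : ℝ) := by
      rw [← Finset.mul_sum, hQh]
      simp only
      rw [condMaxent_sum_one Φ wS x, mul_one]
    rw [hden]
    refine Finset.sum_congr rfl (fun k _ => ?_)
    have hpne : (p : ℝ) ≠ 0 := ne_of_gt hpR
    field_simp
  -- Jensen
  have jensen : ∀ x y, ℓ (∑ k, Qh k x * h k x) y ≤ ∑ k, Qh k x * ℓ (h k x) y := by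
    intro x y
    have := (hconv y).map_sum_le (t := Finset.univ) (w := fun k => Qh k x)
      (p := fun k => h k x)
      (fun k _ => le_of_lt (condMaxent_pos Φ wS (x, k)))
      (by rw [hQh]; simpa using condMaxent_sum_one Φ wS x)
      (fun k _ => Set.mem_univ _)
    simpa [smul_eq_mul] using this
  -- comparison of the weights
  have hQhQc : ∀ k x, Qh k x ≤ E * (dstar * Qc k x) := by
    intro k x
    have h1 : Qh k x ≤ E * Qs k x := by
      have hlog : Real.log (Qh k x) - Real.log (Qs k x) ≤ 2 * r * a := by
        rw [hQh, hQs]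
        simp only
        rw [log_condMaxent Φ wS (x, k), log_condMaxent Φ wstar (x, k)]
        have := phi_diff_le Φ hΦ wstar wS (x, k)
        have h2 : 2 * r * ‖wstar - wS‖ ≤ 2 * r * a := by
          rw [norm_sub_rev]
          exact mul_le_mul_of_nonneg_left ha (by positivity)
        linarith
      have h3 : Qh k x = Real.exp (Real.log (Qh k x)) :=
        (Real.exp_log (condMaxent_pos Φ wS (x, k))).symm
      have h4 : Real.exp (Real.log (Qh k x)) ≤ Real.exp (2 * r * a + Real.log (Qs k x)) :=
        Real.exp_le_exp.2 (by linarith)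
      rw [Real.exp_add, Real.exp_log (condMaxent_pos Φ wstar (x, k))] at h4
      rw [h3, hE]
      exact h4
    have h5 : Qs k x ≤ dstar * Qc k x := by
      have h6 : Qs k x / Qc k x ≤ dstar := by
        rw [hdstar]
        have hb1 : BddAbove (Set.range fun k : Fin p =>
            condMaxent Φ wstar (x, k) / (Dm k x / ∑ j, Dm j x)) :=
          Set.Finite.bddAbove (Set.finite_range _)
        have hb2 : BddAbove (Set.range fun x : X => ⨆ k : Fin p,
            condMaxent Φ wstar (x, k) / (Dm k x / ∑ j, Dm j x)) :=
          Set.Finite.bddAbove (Set.finite_range _)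
        calc Qs k x / Qc k x
            ≤ ⨆ k : Fin p, condMaxent Φ wstar (x, k) / (Dm k x / ∑ j, Dm j x) :=
              le_ciSup hb1 k
          _ ≤ _ := le_ciSup hb2 x
      have h7 : Qs k x = (Qs k x / Qc k x) * Qc k x :=
        (div_mul_cancel₀ _ (ne_of_gt (hQcpos k x))).symm
      rw [h7]
      exact mul_le_mul_of_nonneg_right h6 (le_of_lt (hQcpos k x))
    calc Qh k x ≤ E * Qs k x := h1
      _ ≤ E * (dstar * Qc k x) := mul_le_mul_of_nonneg_left h5 (le_of_lt hEpos)
  -- the target distribution weights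
  set DT : X × Y → ℝ := fun v => ∑ k, lam k * (Dm k v.1 * C v.1 v.2) with hDT
  have hDT0 : ∀ v, 0 ≤ DT v := fun v => Finset.sum_nonneg (fun k _ =>
    mul_nonneg (hlam.1 k) (mul_nonneg (le_of_lt (hDmpos k v.1)) (hC0 v.1 v.2)))
  have hDTle : ∀ v : X × Y, DT v ≤ (∑ j, Dm j v.1) * C v.1 v.2 := by
    intro v
    rw [hDT]
    have : ∀ k, lam k * (Dm k v.1 * C v.1 v.2) ≤ Dm k v.1 * C v.1 v.2 := by
      intro k
      have hk1 : lam k ≤ 1 := by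
        rw [← hlam.2]
        exact Finset.single_le_sum (fun j _ => hlam.1 j) (Finset.mem_univ k)
      nlinarith [hlam.1 k, le_of_lt (hDmpos k v.1), hC0 v.1 v.2,
        mul_nonneg (le_of_lt (hDmpos k v.1)) (hC0 v.1 v.2)]
    calc ∑ k, lam k * (Dm k v.1 * C v.1 v.2) ≤ ∑ k, Dm k v.1 * C v.1 v.2 :=
          Finset.sum_le_sum (fun k _ => this k)
      _ = (∑ j, Dm j v.1) * C v.1 v.2 := by rw [Finset.sum_mul]
  -- main chain
  calc expLoss ℓ DT (weightedComb Qh h (fun _ => 1 / (p : ℝ)))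
      = ∑ v : X × Y, DT v * ℓ (∑ k, Qh k v.1 * h k v.1) v.2 := by
        rw [expLoss]
        exact Finset.sum_congr rfl (fun v _ => by rw [hg v.1])
    _ ≤ ∑ v : X × Y, DT v * ∑ k, Qh k v.1 * ℓ (h k v.1) v.2 :=
        Finset.sum_le_sum (fun v _ =>
          mul_le_mul_of_nonneg_left (jensen v.1 v.2) (hDT0 v))
    _ ≤ ∑ v : X × Y, DT v * ∑ k, (E * (dstar * Qc k v.1)) * ℓ (h k v.1) v.2 :=
        Finset.sum_le_sum (fun v _ => mul_le_mul_of_nonneg_left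
          (Finset.sum_le_sum (fun k _ =>
            mul_le_mul_of_nonneg_right (hQhQc k v.1) (hℓ0 _ _))) (hDT0 v))
    _ = E * dstar * ∑ v : X × Y, ∑ k, DT v * Qc k v.1 * ℓ (h k v.1) v.2 := by
        rw [Finset.mul_sum]
        refine Finset.sum_congr rfl (fun v _ => ?_)
        rw [Finset.mul_sum, Finset.mul_sum]
        exact Finset.sum_congr rfl (fun k _ => by ring)
    _ ≤ E * dstar * ∑ v : X × Y, ∑ k, Dm k v.1 * C v.1 v.2 * ℓ (h k v.1) v.2 := by
        refine mul_le_mul_of_nonneg_left (Finset.sum_le_sum (fun v _ =>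
          Finset.sum_le_sum (fun k _ => ?_))) (by positivity)
        have step : DT v * Qc k v.1 ≤ Dm k v.1 * C v.1 v.2 := by
          have h8 : DT v * Qc k v.1 ≤ ((∑ j, Dm j v.1) * C v.1 v.2) * Qc k v.1 :=
            mul_le_mul_of_nonneg_right (hDTle v) (le_of_lt (hQcpos k v.1))
          have h9 : ((∑ j, Dm j v.1) * C v.1 v.2) * Qc k v.1 = Dm k v.1 * C v.1 v.2 := by
            rw [hQc]
            have hs : (0 : ℝ) < ∑ j, Dm j v.1 :=
              Finset.sum_pos (fun j _ => hDmpos j v.1) Finset.univ_nonempty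
            field_simp
          linarith [h8, h9.le, h9.ge]
        exact mul_le_mul_of_nonneg_right step (hℓ0 _ _)
    _ = E * dstar * ∑ k, expLoss ℓ (fun v : X × Y => Dm k v.1 * C v.1 v.2) (h k) := by
        congr 1
        rw [Finset.sum_comm]
        refine Finset.sum_congr rfl (fun k _ => ?_)
        rw [expLoss]
    _ ≤ E * dstar * ∑ k : Fin p, ε := by
        refine mul_le_mul_of_nonneg_left (Finset.sum_le_sum (fun k _ => hacc k))
          (by positivity)
    _ = ε * p * E * dstar := by
        rw [Finset.sum_const, Finset.card_univ, Fintype.card_fin, nsmul_eq_mul]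
        ring

end Det

end DMSA

open DMSA in
/-- DMSA finite-sample guarantee with conditional Maxent (Theorem 5): there is a
`z` in the simplex such that for any `δ > 0`, with probability at least `1 − δ`
over the i.i.d. sample of size `m` from `Q(x, k) = (1/p) D_k(x)` used to train
conditional Maxent, the discriminative predictor `ĝ_z`, built from the
estimates `Q̂(k|x) = p_ŵ[k|x]`, satisfies, for every target mixture `D_T` of
the source distributions,
`L(D_T, ĝ_z) ≤ ε p exp((6√2 r²)/(μ√m)(1 + √(log(1/δ)))) d* d'*`, with
`d* = sup_x d_∞(Q*[·|x] ‖ Q(·|x))` and `d'* = sup_x d_∞(Q(·|x) ‖ Q*[·|x])²`,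
where `Q*(·|x) = p_{w*}[·|x]` is the population conditional Maxent solution. -/
theorem dmsa_condMaxent_finite_sample {X Y : Type*} [Fintype X] [Nonempty X] [Fintype Y]
    {p N : ℕ} [NeZero p]
    -- true source marginals and common conditional probability
    (Dm : Fin p → X → ℝ) (hDmpos : ∀ k x, 0 < Dm k x) (hDmsum : ∀ k, ∑ x, Dm k x = 1)
    (C : X → Y → ℝ) (hCpos : ∀ x y, 0 < C x y) (hCsum : ∀ x, ∑ y, C x y = 1)
    -- loss function: convex, continuous, nonnegative, bounded by M on the predictors
    (ℓ : ℝ → Y → ℝ) (M : ℝ) (hM : 0 < M)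
    (hconv : ∀ y, ConvexOn ℝ Set.univ fun t => ℓ t y)
    (hcont : ∀ y, Continuous fun t => ℓ t y)
    (hℓ0 : ∀ t y, 0 ≤ ℓ t y)
    -- source predictors, each ε-accurate on its own domain, with loss bounded by M
    (ε : ℝ) (h : Fin p → X → ℝ)
    (hbound : ∀ k x y, ℓ (h k x) y ≤ M)
    (hacc : ∀ k, expLoss ℓ (fun v => Dm k v.1 * C v.1 v.2) (h k) ≤ ε)
    -- conditional Maxent: feature map, regularization, sample size
    (Φ : X × Fin p → EuclideanSpace ℝ (Fin N))
    (r : ℝ) (hr : 0 < r) (hΦ : ∀ v, ‖Φ v‖ ≤ r)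
    (μ : ℝ) (hμ : 0 < μ) (m : ℕ) (hm : 0 < m)
    -- population solution of the conditional Maxent problem
    (wstar : EuclideanSpace ℝ (Fin N))
    (hstar : ∀ w : EuclideanSpace ℝ (Fin N),
      μ * ‖wstar‖ ^ 2
          - ∑ v : X × Fin p, (1 / (p : ℝ)) * Dm v.2 v.1 * Real.log (condMaxent Φ wstar v) ≤
        μ * ‖w‖ ^ 2
          - ∑ v : X × Fin p, (1 / (p : ℝ)) * Dm v.2 v.1 * Real.log (condMaxent Φ w v))
    -- empirical solution on each sample of size m
    (what : (Fin m → X × Fin p) → EuclideanSpace ℝ (Fin N))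
    (hhat : ∀ (S : Fin m → X × Fin p) (w : EuclideanSpace ℝ (Fin N)),
      μ * ‖what S‖ ^ 2 - (1 / (m : ℝ)) * ∑ i, Real.log (condMaxent Φ (what S) (S i)) ≤
        μ * ‖w‖ ^ 2 - (1 / (m : ℝ)) * ∑ i, Real.log (condMaxent Φ w (S i))) :
    ∃ z ∈ stdSimplex ℝ (Fin p), ∀ δ > 0,
      sampleProb m (fun v : X × Fin p => (1 / (p : ℝ)) * Dm v.2 v.1)
        (fun S => ∀ lam ∈ stdSimplex ℝ (Fin p),
          expLoss ℓ (fun v : X × Y => ∑ k, lam k * (Dm k v.1 * C v.1 v.2))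
              (weightedComb (fun k x => condMaxent Φ (what S) (x, k)) h z) ≤
            ε * p *
              Real.exp (6 * Real.sqrt 2 * r ^ 2 / (μ * Real.sqrt m) *
                (1 + Real.sqrt (Real.log (1 / δ)))) *
              (⨆ x : X, ⨆ k : Fin p,
                condMaxent Φ wstar (x, k) / (Dm k x / ∑ j, Dm j x)) *
              (⨆ x : X, (⨆ k : Fin p,
                (Dm k x / ∑ j, Dm j x) / condMaxent Φ wstar (x, k)) ^ 2)) ≥
        1 - δ := by
  classical
  have hpR : (0 : ℝ) < p := by exact_mod_cast Nat.pos_of_ne_zero (NeZero.ne p)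
  have hmR : (0 : ℝ) < m := by exact_mod_cast hm
  -- the sampling distribution
  have hq0 : ∀ v : X × Fin p, 0 ≤ (1 / (p : ℝ)) * Dm v.2 v.1 :=
    fun v => mul_nonneg (by positivity) (le_of_lt (hDmpos v.2 v.1))
  have hq1 : ∑ v : X × Fin p, (1 / (p : ℝ)) * Dm v.2 v.1 = 1 := by
    rw [Fintype.sum_prod_type, Finset.sum_comm]
    have : ∀ k : Fin p, ∑ x : X, (1 / (p : ℝ)) * Dm k x = 1 / (p : ℝ) := by
      intro k
      rw [← Finset.mul_sum, hDmsum k, mul_one]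
    rw [Finset.sum_congr rfl (fun k _ => this k), Finset.sum_const, Finset.card_univ,
      Fintype.card_fin, nsmul_eq_mul]
    field_simp
  -- translate the optimality hypotheses into `phi` form
  have conv_pop : ∀ w : EuclideanSpace ℝ (Fin N),
      ∑ v : X × Fin p, (1 / (p : ℝ)) * Dm v.2 v.1 * phi Φ w v
        = - ∑ v : X × Fin p, (1 / (p : ℝ)) * Dm v.2 v.1 * Real.log (condMaxent Φ w v) := by
    intro w
    rw [← Finset.sum_neg_distrib]
    refine Finset.sum_congr rfl (fun v _ => ?_)
    rw [log_condMaxent Φ w v]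
    ring
  have hstar' : ∀ w : EuclideanSpace ℝ (Fin N),
      μ * ‖wstar‖ ^ 2 + ∑ v : X × Fin p, (1 / (p : ℝ)) * Dm v.2 v.1 * phi Φ wstar v
        ≤ μ * ‖w‖ ^ 2 + ∑ v : X × Fin p, (1 / (p : ℝ)) * Dm v.2 v.1 * phi Φ w v := by
    intro w
    have h1 := hstar w
    rw [conv_pop wstar, conv_pop w]
    linarith
  have conv_emp : ∀ (w : EuclideanSpace ℝ (Fin N)) (S : Fin m → X × Fin p),
      (1 / (m : ℝ)) * ∑ i, phi Φ w (S i)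
        = - ((1 / (m : ℝ)) * ∑ i, Real.log (condMaxent Φ w (S i))) := by
    intro w S
    rw [show ∑ i, Real.log (condMaxent Φ w (S i)) = ∑ i, - phi Φ w (S i) from
      Finset.sum_congr rfl (fun i _ => log_condMaxent Φ w (S i)), Finset.sum_neg_distrib]
    ring
  have hhat' : ∀ (S : Fin m → X × Fin p) (w : EuclideanSpace ℝ (Fin N)),
      μ * ‖what S‖ ^ 2 + (1 / (m : ℝ)) * ∑ i, phi Φ (what S) (S i)
        ≤ μ * ‖w‖ ^ 2 + (1 / (m : ℝ)) * ∑ i, phi Φ w (S i) := by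
    intro S w
    have h1 := hhat S w
    rw [conv_emp (what S) S, conv_emp w S]
    linarith
  -- nonnegativity facts
  have hε0 : 0 ≤ ε := by
    have k0 : Fin p := Classical.arbitrary _
    refine le_trans ?_ (hacc k0)
    refine Finset.sum_nonneg (fun v _ => ?_)
    exact mul_nonneg (mul_nonneg (le_of_lt (hDmpos k0 v.1)) (le_of_lt (hCpos v.1 v.2)))
      (hℓ0 _ _)
  have hQcpos : ∀ (k : Fin p) (x : X), 0 < Dm k x / ∑ j, Dm j x := fun k x =>
    div_pos (hDmpos k x) (Finset.sum_pos (fun j _ => hDmpos j x) Finset.univ_nonempty)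
  have hdnn : 0 ≤ ⨆ x : X, ⨆ k : Fin p,
      condMaxent Φ wstar (x, k) / (Dm k x / ∑ j, Dm j x) := by
    apply Real.iSup_nonneg
    intro x
    apply Real.iSup_nonneg
    intro k
    exact le_of_lt (div_pos (condMaxent_pos Φ wstar (x, k)) (hQcpos k x))
  -- the second Rényi factor is at least one
  have hd2 : 1 ≤ ⨆ x : X, (⨆ k : Fin p,
      (Dm k x / ∑ j, Dm j x) / condMaxent Φ wstar (x, k)) ^ 2 := by
    have x0 : X := Classical.arbitrary _
    have hsum_c : ∑ k, Dm k x0 / ∑ j, Dm j x0 = 1 := by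
      rw [← Finset.sum_div]
      exact div_self (ne_of_gt (Finset.sum_pos (fun j _ => hDmpos j x0) Finset.univ_nonempty))
    have hex : ∃ k : Fin p, condMaxent Φ wstar (x0, k) ≤ Dm k x0 / ∑ j, Dm j x0 := by
      by_contra hcon
      push_neg at hcon
      have := Finset.sum_lt_sum_of_nonempty Finset.univ_nonempty
        (fun k (_ : k ∈ Finset.univ) => hcon k)
      rw [hsum_c, condMaxent_sum_one Φ wstar x0] at this
      exact lt_irrefl 1 this
    obtain ⟨k0, hk0⟩ := hex
    have h1 : (1 : ℝ) ≤ (Dm k0 x0 / ∑ j, Dm j x0) / condMaxent Φ wstar (x0, k0) :=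
      (one_le_div (condMaxent_pos Φ wstar (x0, k0))).2 hk0
    have h2 : (1 : ℝ) ≤ ⨆ k : Fin p,
        (Dm k x0 / ∑ j, Dm j x0) / condMaxent Φ wstar (x0, k) :=
      le_trans h1 (le_ciSup (f := fun k : Fin p =>
        (Dm k x0 / ∑ j, Dm j x0) / condMaxent Φ wstar (x0, k))
        (Set.Finite.bddAbove (Set.finite_range _)) k0)
    have h3 : (1 : ℝ) ≤ (⨆ k : Fin p,
        (Dm k x0 / ∑ j, Dm j x0) / condMaxent Φ wstar (x0, k)) ^ 2 := by nlinarith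
    exact le_trans h3 (le_ciSup (f := fun x : X => (⨆ k : Fin p,
      (Dm k x / ∑ j, Dm j x) / condMaxent Φ wstar (x, k)) ^ 2)
      (Set.Finite.bddAbove (Set.finite_range _)) x0)
  -- the uniform mixture weights
  refine ⟨fun _ => 1 / (p : ℝ), ⟨fun k => by positivity, ?_⟩, ?_⟩
  · rw [Finset.sum_const, Finset.card_univ, Fintype.card_fin, nsmul_eq_mul]
    field_simp
  intro δ hδ
  by_cases hδ1 : 1 ≤ δ
  · have := sampleProb_nonneg (m := m) (fun v : X × Fin p => (1 / (p : ℝ)) * Dm v.2 v.1) hq0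
      (fun S => ∀ lam ∈ stdSimplex ℝ (Fin p),
        expLoss ℓ (fun v : X × Y => ∑ k, lam k * (Dm k v.1 * C v.1 v.2))
            (weightedComb (fun k x => condMaxent Φ (what S) (x, k)) h (fun _ => 1 / (p : ℝ))) ≤
          ε * p *
            Real.exp (6 * Real.sqrt 2 * r ^ 2 / (μ * Real.sqrt m) *
              (1 + Real.sqrt (Real.log (1 / δ)))) *
            (⨆ x : X, ⨆ k : Fin p,
              condMaxent Φ wstar (x, k) / (Dm k x / ∑ j, Dm j x)) *
            (⨆ x : X, (⨆ k : Fin p,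
              (Dm k x / ∑ j, Dm j x) / condMaxent Φ wstar (x, k)) ^ 2))
    linarith
  push_neg at hδ1
  set a0 : ℝ := 3 * Real.sqrt 2 * r / (μ * Real.sqrt m) * (1 + Real.sqrt (Real.log (1 / δ)))
    with ha0
  have htail := psi_tail Φ hr hμ hm hΦ (fun v : X × Fin p => (1 / (p : ℝ)) * Dm v.2 v.1)
    hq0 hq1 what hhat' wstar hstar' hδ hδ1
  have hdet : ∀ S : Fin m → X × Fin p,
      ¬ (a0 < ‖what S - wstar‖) →
      ∀ lam ∈ stdSimplex ℝ (Fin p),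
        expLoss ℓ (fun v : X × Y => ∑ k, lam k * (Dm k v.1 * C v.1 v.2))
            (weightedComb (fun k x => condMaxent Φ (what S) (x, k)) h (fun _ => 1 / (p : ℝ))) ≤
          ε * p *
            Real.exp (6 * Real.sqrt 2 * r ^ 2 / (μ * Real.sqrt m) *
              (1 + Real.sqrt (Real.log (1 / δ)))) *
            (⨆ x : X, ⨆ k : Fin p,
              condMaxent Φ wstar (x, k) / (Dm k x / ∑ j, Dm j x)) *
            (⨆ x : X, (⨆ k : Fin p,
              (Dm k x / ∑ j, Dm j x) / condMaxent Φ wstar (x, k)) ^ 2) := by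
    intro S hS lam hlam
    have hle : ‖what S - wstar‖ ≤ a0 := not_lt.1 hS
    have hdb := det_bound Dm hDmpos C (fun x y => le_of_lt (hCpos x y)) ℓ hconv hℓ0 ε h hacc
      Φ hr hΦ wstar (what S) a0 hle lam hlam
    have hexp : Real.exp (2 * r * a0)
        = Real.exp (6 * Real.sqrt 2 * r ^ 2 / (μ * Real.sqrt m) *
            (1 + Real.sqrt (Real.log (1 / δ)))) := by
      congr 1
      rw [ha0]
      ring
    rw [hexp] at hdb
    refine le_trans hdb ?_
    have hbase : 0 ≤ ε * p *
        Real.exp (6 * Real.sqrt 2 * r ^ 2 / (μ * Real.sqrt m) *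
          (1 + Real.sqrt (Real.log (1 / δ)))) *
        (⨆ x : X, ⨆ k : Fin p, condMaxent Φ wstar (x, k) / (Dm k x / ∑ j, Dm j x)) := by
      have := Real.exp_nonneg (6 * Real.sqrt 2 * r ^ 2 / (μ * Real.sqrt m) *
        (1 + Real.sqrt (Real.log (1 / δ))))
      positivity
    nlinarith [hd2, hbase]
  calc 1 - δ
      ≤ 1 - sampleProb m (fun v : X × Fin p => (1 / (p : ℝ)) * Dm v.2 v.1)
          (fun S => a0 < ‖what S - wstar‖) := by linarith
    _ = sampleProb m (fun v : X × Fin p => (1 / (p : ℝ)) * Dm v.2 v.1)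
          (fun S => ¬ (a0 < ‖what S - wstar‖)) := by
        have := sampleProb_compl (m := m) (fun v : X × Fin p => (1 / (p : ℝ)) * Dm v.2 v.1)
          hq1 (fun S => a0 < ‖what S - wstar‖)
        linarith
    _ ≤ _ := sampleProb_mono (m := m) (fun v : X × Fin p => (1 / (p : ℝ)) * Dm v.2 v.1)
        hq0 hdet
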